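/- Fix ε ∈ (0, 1) and U > 0. Let B : [0, ∞) → ℝ be continuous and set B̄_x := ∫_x^{x+1} B(y) dy. Assume that for all x ≥ 0, |B(x+1) − B(x)| ≤ 6 (U + ε x) and |B̄_x − B(x)| ≤ 6 √(U + ε² x). Then for every continuously differentiable f : ℝ → ℝ with compact support contained in [0, ∞), | ∫_0^∞ f(x)² (B(x+1) − B(x)) dx + ∫_0^∞ f(x) f'(x) (B̄_x − B(x)) dx | ≤ 6 (1 + 1/(2ε)) U ∫_0^∞ f(x)² dx + 10 ε ∫_0^∞ ( f'(x)² + x f(x)² ) dx. -/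

import Mathlib

open MeasureTheory

/-- eq. BoundBrownian, analytic core: fix `ε ∈ (0,1)` and `U > 0`.
Let `B : [0,∞) → ℝ` be continuous with `|B(x+1) − B(x)| ≤ 6(U + εx)` and
`|B̄_x − B(x)| ≤ 6√(U + ε²x)` for all `x ≥ 0`, where `B̄_x := ∫_x^{x+1} B(y) dy`. Then for
every continuously differentiable `f : ℝ → ℝ` with compact support contained in `[0,∞)`,
`|∫_0^∞ f²(B(·+1) − B) + ∫_0^∞ f f'(B̄ − B)| ≤ 6(1 + 1/(2ε)) U ∫_0^∞ f² +
10ε ∫_0^∞ ((f')² + x f²)`. -/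
theorem quadratic_form_bound (ε U : ℝ) (hε : ε ∈ Set.Ioo (0 : ℝ) 1) (hU : 0 < U)
    (B : ℝ → ℝ) (hB : ContinuousOn B (Set.Ici 0))
    (hB1 : ∀ x ≥ (0 : ℝ), |B (x + 1) - B x| ≤ 6 * (U + ε * x))
    (hB2 : ∀ x ≥ (0 : ℝ), |(∫ y in x..(x + 1), B y) - B x| ≤ 6 * Real.sqrt (U + ε ^ 2 * x))
    (f : ℝ → ℝ) (hf : ContDiff ℝ 1 f) (hfc : HasCompactSupport f)
    (hfs : tsupport f ⊆ Set.Ici 0) :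
    |(∫ x in Set.Ici (0 : ℝ), (f x) ^ 2 * (B (x + 1) - B x)) +
        ∫ x in Set.Ici (0 : ℝ), f x * deriv f x * ((∫ y in x..(x + 1), B y) - B x)| ≤
      6 * (1 + 1 / (2 * ε)) * U * (∫ x in Set.Ici (0 : ℝ), (f x) ^ 2) +
        10 * ε * ∫ x in Set.Ici (0 : ℝ), ((deriv f x) ^ 2 + x * (f x) ^ 2) := by
  obtain ⟨hε0, hε1⟩ := hε
  have hfcont : Continuous f := hf.continuous
  have hdcont : Continuous (deriv f) := hf.continuous_deriv le_rfl
  have hdc : HasCompactSupport (deriv f) := hfc.deriv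
  set h1 : ℝ → ℝ := fun x => (f x)^2 * (6*(U + ε*x)) with h1def
  set h2 : ℝ → ℝ := fun x => 3*ε*(deriv f x)^2 + 3*U/ε*(f x)^2 + 3*ε*(x*(f x)^2) with h2def
  set H : ℝ → ℝ := fun x => 6*(1+1/(2*ε))*U*(f x)^2 + 10*ε*((deriv f x)^2 + x*(f x)^2)
    with Hdef
  -- compact supports
  have hfc2 : HasCompactSupport (fun x => (f x)^2) := by
    simp only [pow_two]; exact hfc.mul_right (f' := f)
  have hdc2 : HasCompactSupport (fun x => (deriv f x)^2) := by
    simp only [pow_two]; exact hdc.mul_right (f' := deriv f)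
  have hch1 : HasCompactSupport h1 := hfc2.mul_right
  have hch2 : HasCompactSupport h2 :=
    ((hdc2.mul_left).add ((hfc2.mul_left))).add (hfc2.mul_left.mul_left)
  have hxf2c : HasCompactSupport (fun x => x*(f x)^2) := hfc2.mul_left
  have hcH : HasCompactSupport H :=
    (hfc2.mul_left).add ((hdc2.add hxf2c).mul_left)
  -- continuity
  have hc1 : Continuous h1 := (hfcont.pow 2).mul (by continuity)
  have hc2 : Continuous h2 := by
    apply Continuous.add
    apply Continuous.add
    · exact continuous_const.mul (hdcont.pow 2)
    · exact continuous_const.mul (hfcont.pow 2)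
    · exact continuous_const.mul (continuous_id.mul (hfcont.pow 2))
  have hcHc : Continuous H := by
    apply Continuous.add
    · exact continuous_const.mul (hfcont.pow 2)
    · exact continuous_const.mul ((hdcont.pow 2).add (continuous_id.mul (hfcont.pow 2)))
  -- integrability (on restricted measure)
  have hi1 : Integrable h1 (volume.restrict (Set.Ici (0:ℝ))) :=
    (hc1.integrable_of_hasCompactSupport hch1).restrict
  have hi2 : Integrable h2 (volume.restrict (Set.Ici (0:ℝ))) :=
    (hc2.integrable_of_hasCompactSupport hch2).restrict
  have hiH : Integrable H (volume.restrict (Set.Ici (0:ℝ))) :=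
    (hcHc.integrable_of_hasCompactSupport hcH).restrict
  have hif2 : Integrable (fun x => (f x)^2) (volume.restrict (Set.Ici (0:ℝ))) :=
    ((hfcont.pow 2).integrable_of_hasCompactSupport hfc2).restrict
  have hiq : Integrable (fun x => (deriv f x)^2 + x*(f x)^2) (volume.restrict (Set.Ici (0:ℝ))) :=
    (((hdcont.pow 2).add (continuous_id.mul (hfcont.pow 2))).integrable_of_hasCompactSupport
      (hdc2.add hxf2c)).restrict
  -- a.e. membership
  have hae : ∀ᵐ x ∂(volume.restrict (Set.Ici (0:ℝ))), x ∈ Set.Ici (0:ℝ) :=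
    ae_restrict_mem measurableSet_Ici
  -- first integral bound
  have hb1 : |∫ x in Set.Ici (0:ℝ), (f x)^2 * (B (x+1) - B x)| ≤
      ∫ x in Set.Ici (0:ℝ), h1 x := by
    rw [← Real.norm_eq_abs]
    refine (norm_integral_le_integral_norm _).trans ?_
    refine integral_mono_of_nonneg (Filter.Eventually.of_forall fun x => norm_nonneg _) hi1 ?_
    filter_upwards [hae] with x hx
    rw [Real.norm_eq_abs]
    have hx0 : (0:ℝ) ≤ x := hx
    calc |(f x)^2 * (B (x+1) - B x)| = (f x)^2 * |B (x+1) - B x| := by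
          rw [abs_mul, abs_of_nonneg (sq_nonneg _)]
      _ ≤ (f x)^2 * (6*(U + ε*x)) :=
          mul_le_mul_of_nonneg_left (hB1 x hx0) (sq_nonneg _)
  -- second integral bound
  have hb2 : |∫ x in Set.Ici (0:ℝ), f x * deriv f x * ((∫ y in x..(x+1), B y) - B x)| ≤
      ∫ x in Set.Ici (0:ℝ), h2 x := by
    rw [← Real.norm_eq_abs]
    refine (norm_integral_le_integral_norm _).trans ?_
    refine integral_mono_of_nonneg (Filter.Eventually.of_forall fun x => norm_nonneg _) hi2 ?_
    filter_upwards [hae] with x hx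
    rw [Real.norm_eq_abs]
    have hx0 : (0:ℝ) ≤ x := hx
    have hs : (0:ℝ) ≤ U + ε^2*x := by positivity
    have hr2 : (Real.sqrt (U + ε^2*x))^2 = U + ε^2*x := Real.sq_sqrt hs
    have hr0 : (0:ℝ) ≤ Real.sqrt (U + ε^2*x) := Real.sqrt_nonneg _
    have step1 : |f x * deriv f x * ((∫ y in x..(x+1), B y) - B x)| ≤
        |f x| * |deriv f x| * (6 * Real.sqrt (U + ε^2*x)) := by
      rw [abs_mul, abs_mul]
      exact mul_le_mul_of_nonneg_left (hB2 x hx0) (mul_nonneg (abs_nonneg _) (abs_nonneg _))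
    refine step1.trans ?_
    have ha := abs_nonneg (f x)
    have hb := abs_nonneg (deriv f x)
    have haf : |f x|^2 = (f x)^2 := sq_abs _
    have hbf : |deriv f x|^2 = (deriv f x)^2 := sq_abs _
    show |f x| * |deriv f x| * (6 * Real.sqrt (U + ε^2*x)) ≤
        3*ε*(deriv f x)^2 + 3*U/ε*(f x)^2 + 3*ε*(x*(f x)^2)
    have key : ε * (|f x| * |deriv f x| * (6 * Real.sqrt (U + ε^2*x))) ≤
        ε * (3*ε*(deriv f x)^2 + 3*U/ε*(f x)^2 + 3*ε*(x*(f x)^2)) := by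
      have e1 : ε * (3*U/ε*(f x)^2) = 3*U*(f x)^2 := by field_simp
      nlinarith [sq_nonneg (ε*|deriv f x| - |f x| * Real.sqrt (U + ε^2*x)), hr2, hε0,
        mul_nonneg (mul_nonneg ha hb) hr0]
    exact le_of_mul_le_mul_left key hε0
  -- combine
  have hsum : (∫ x in Set.Ici (0:ℝ), h1 x) + (∫ x in Set.Ici (0:ℝ), h2 x) ≤
      ∫ x in Set.Ici (0:ℝ), H x := by
    rw [← integral_add hi1 hi2]
    refine integral_mono_ae (hi1.add hi2) hiH ?_
    filter_upwards [hae] with x hx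
    have hx0 : (0:ℝ) ≤ x := hx
    have e1 : 6*(1+1/(2*ε))*U = 6*U + 3*U/ε := by field_simp; ring
    simp only [h1def, h2def, Hdef, Pi.add_apply]
    rw [e1]
    nlinarith [mul_nonneg (mul_nonneg hε0.le hx0) (sq_nonneg (f x)),
      mul_nonneg hε0.le (sq_nonneg (deriv f x))]
  have hHeq : (∫ x in Set.Ici (0:ℝ), H x) =
      6 * (1 + 1 / (2 * ε)) * U * (∫ x in Set.Ici (0 : ℝ), (f x) ^ 2) +
        10 * ε * ∫ x in Set.Ici (0 : ℝ), ((deriv f x) ^ 2 + x * (f x) ^ 2) := by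
    rw [Hdef]
    rw [integral_add (hif2.const_mul _) (hiq.const_mul _), integral_const_mul, integral_const_mul]
  exact ((abs_add_le _ _).trans (add_le_add hb1 hb2)).trans (hsum.trans (le_of_eq hHeq))
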